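/- For every natural number n ≥ 1 and integer x with 1 ≤ x ≤ 2^n − 1, we have 0 < (5^n·x/2^n − ⌊5^n·x/2^n⌋) · (2^n/5^n) < 1. -/

import Mathlib

theorem fractional_loss_bound (n : ℕ) (hn : 1 ≤ n) (x : ℤ) (hx1 : 1 ≤ x) (hx2 : x ≤ 2 ^ n - 1) :
    0 < ((5 ^ n * (x : ℚ) / 2 ^ n - ⌊(5 ^ n * (x : ℚ) / 2 ^ n)⌋) * (2 ^ n / 5 ^ n)) ∧
    ((5 ^ n * (x : ℚ) / 2 ^ n - ⌊(5 ^ n * (x : ℚ) / 2 ^ n)⌋) * (2 ^ n / 5 ^ n)) < 1 := by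
  set r : ℚ := 5 ^ n * (x : ℚ) / 2 ^ n with hr
  have h2 : (0:ℚ) < 2 ^ n := by positivity
  have h5 : (0:ℚ) < 5 ^ n := by positivity
  have hratio : (0:ℚ) < 2 ^ n / 5 ^ n := by positivity
  have hratio1 : (2:ℚ) ^ n / 5 ^ n < 1 := by
    rw [div_lt_one h5]
    exact pow_lt_pow_left₀ (by norm_num) (by norm_num) (by omega)
  have hfrac : r - ⌊r⌋ = Int.fract r := (Int.self_sub_floor r).symm
  have hne : r ≠ ⌊r⌋ := by
    intro h
    have hq : (5:ℚ) ^ n * x = ⌊r⌋ * 2 ^ n := by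
      calc (5:ℚ) ^ n * x = r * 2 ^ n := by rw [hr, div_mul_cancel₀ _ h2.ne']
        _ = ⌊r⌋ * 2 ^ n := by rw [← h]
    have hz : (5:ℤ) ^ n * x = ⌊r⌋ * 2 ^ n := by
      exact_mod_cast hq
    have hdvd : (2:ℤ) ^ n ∣ 5 ^ n * x := ⟨⌊r⌋, by linarith [hz]⟩
    have hcop : IsCoprime ((2:ℤ) ^ n) (5 ^ n) := by
      apply IsCoprime.pow
      exact Int.isCoprime_iff_gcd_eq_one.mpr rfl
    have hdx : (2:ℤ) ^ n ∣ x := hcop.dvd_of_dvd_mul_left hdvd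
    have h2n : (1:ℤ) ≤ 2 ^ n := one_le_pow₀ (by norm_num)
    have := Int.le_of_dvd (by omega) hdx
    omega
  have hpos : 0 < Int.fract r := Int.fract_pos.mpr hne
  have hlt : Int.fract r < 1 := Int.fract_lt_one r
  rw [hfrac]
  constructor
  · positivity
  · nlinarith
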